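/- arXiv:1401.5371 — 2 statements merged into one kernel-verified Lean document; each statement's English description precedes it below -/
import Mathlib

section
/- Suppose h : [k_min, k_max] × [0,1] → ℝ is continuous, h(k,ψ) < 0 for all ψ ∈ [0,1] when k = k_min (stability), h(k_max, ψ₀) > 0 for some ψ₀ (instability), h(k,ψ) < 0 whenever ψ ∉ (ψ₁, ψ₂) for fixed 0 ≤ ψ₁ < ψ₂ ≤ 1, and h is continuously differentiable with ∂h/∂k ≠ 0 on B := [k_min,k_max] × [ψ₁,ψ₂]. Then there exists k* with k_min < k* < k_max such that h(k,ψ) < 0 for all ψ whenever k < k*, and for every k > k* there exists ψ with h(k,ψ) > 0. -/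
open Set

/-- Sharp stability transition, part (i). Suppose `h` is continuous on
`[k_min,k_max] × [0,1]`, `h(k_min,·) < 0` (stability), `h(k_max,ψ₀) > 0` for some `ψ₀`
(instability), `h(k,ψ) < 0` whenever `ψ ∉ (ψ₁,ψ₂)`, and `h` has a continuous, nonvanishing
partial derivative in `k` on `B = [k_min,k_max] × [ψ₁,ψ₂]`. Then there is a sharp
stability boundary `k*` with `k_min < k* < k_max`: stability holds for `k < k*` and
fails for `k > k*`. -/
theorem sharp_transition_part_i (kmin kmax ψ₁ ψ₂ : ℝ) (h hk : ℝ → ℝ → ℝ)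
    (hk_lt : kmin < kmax) (hψ₁ : 0 ≤ ψ₁) (hψ₁₂ : ψ₁ < ψ₂) (hψ₂ : ψ₂ ≤ 1)
    (hcont : ContinuousOn (fun p : ℝ × ℝ => h p.1 p.2) (Icc kmin kmax ×ˢ Icc 0 1))
    (hstab : ∀ ψ ∈ Icc (0:ℝ) 1, h kmin ψ < 0)
    (hunstab : ∃ ψ₀ ∈ Icc (0:ℝ) 1, 0 < h kmax ψ₀)
    (hneg : ∀ k ∈ Icc kmin kmax, ∀ ψ ∈ Icc (0:ℝ) 1, ψ ∉ Ioo ψ₁ ψ₂ → h k ψ < 0)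
    (hderiv : ∀ k ∈ Icc kmin kmax, ∀ ψ ∈ Icc ψ₁ ψ₂,
      HasDerivAt (fun k' => h k' ψ) (hk k ψ) k)
    (hk_cont : ContinuousOn (fun p : ℝ × ℝ => hk p.1 p.2) (Icc kmin kmax ×ˢ Icc ψ₁ ψ₂))
    (hk_ne : ∀ k ∈ Icc kmin kmax, ∀ ψ ∈ Icc ψ₁ ψ₂, hk k ψ ≠ 0) :
    ∃ kstar, kmin < kstar ∧ kstar < kmax ∧
      (∀ k ∈ Icc kmin kmax, k < kstar → ∀ ψ ∈ Icc (0:ℝ) 1, h k ψ < 0) ∧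
      (∀ k ∈ Icc kmin kmax, kstar < k → ∃ ψ ∈ Icc (0:ℝ) 1, 0 < h k ψ) := by
  obtain ⟨ψ₀, hψ₀01, hψ₀pos⟩ := hunstab
  have hJ01 : Icc ψ₁ ψ₂ ⊆ Icc (0:ℝ) 1 := Icc_subset_Icc hψ₁ hψ₂
  have hmax_mem : kmax ∈ Icc kmin kmax := ⟨hk_lt.le, le_refl _⟩
  have hmin_mem : kmin ∈ Icc kmin kmax := ⟨le_refl _, hk_lt.le⟩
  -- ψ₀ lies in the open band
  have hψ₀Ioo : ψ₀ ∈ Ioo ψ₁ ψ₂ := by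
    by_contra hc
    exact absurd (hneg kmax hmax_mem ψ₀ hψ₀01 hc) (not_lt.2 hψ₀pos.le)
  have hψ₀J : ψ₀ ∈ Icc ψ₁ ψ₂ := Ioo_subset_Icc_self hψ₀Ioo
  -- continuity of slices in k
  have hslice : ∀ ψ ∈ Icc (0:ℝ) 1, ContinuousOn (fun k => h k ψ) (Icc kmin kmax) := by
    intro ψ hψ
    have hc2 : ContinuousOn (fun k : ℝ => ((k, ψ) : ℝ × ℝ)) (Icc kmin kmax) :=
      (continuous_id.prodMk continuous_const).continuousOn
    exact hcont.comp hc2 (fun k hkk => ⟨hkk, hψ⟩)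
  -- MVT gives a point where hk is positive
  obtain ⟨c, hcIoo, hc_eq⟩ := exists_hasDerivAt_eq_slope (fun k => h k ψ₀) (fun k => hk k ψ₀)
    hk_lt (hslice ψ₀ hψ₀01)
    (fun x hx => hderiv x (Ioo_subset_Icc_self hx) ψ₀ hψ₀J)
  have hc_pos : 0 < hk c ψ₀ := by
    rw [hc_eq]
    have h1 : h kmin ψ₀ < 0 := hstab ψ₀ hψ₀01
    have h2 : (0:ℝ) < kmax - kmin := by linarith
    apply div_pos (by linarith) h2
  -- hk is positive everywhere on B by connectedness
  have hB_pre : IsPreconnected ((Icc kmin kmax) ×ˢ (Icc ψ₁ ψ₂)) :=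
    isPreconnected_Icc.prod isPreconnected_Icc
  have hk_pos : ∀ k ∈ Icc kmin kmax, ∀ ψ ∈ Icc ψ₁ ψ₂, 0 < hk k ψ := by
    intro k hkk ψ hψ
    by_contra hle
    push_neg at hle
    have hlt : hk k ψ < 0 := lt_of_le_of_ne hle (hk_ne k hkk ψ hψ)
    have himg : IsPreconnected ((fun p : ℝ × ℝ => hk p.1 p.2) '' (Icc kmin kmax ×ˢ Icc ψ₁ ψ₂)) :=
      hB_pre.image _ hk_cont
    have hoc := himg.ordConnected
    have h1 : hk k ψ ∈ (fun p : ℝ × ℝ => hk p.1 p.2) '' (Icc kmin kmax ×ˢ Icc ψ₁ ψ₂) :=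
      ⟨(k, ψ), ⟨hkk, hψ⟩, rfl⟩
    have h2 : hk c ψ₀ ∈ (fun p : ℝ × ℝ => hk p.1 p.2) '' (Icc kmin kmax ×ˢ Icc ψ₁ ψ₂) :=
      ⟨(c, ψ₀), ⟨Ioo_subset_Icc_self hcIoo, hψ₀J⟩, rfl⟩
    have h0 : (0:ℝ) ∈ (fun p : ℝ × ℝ => hk p.1 p.2) '' (Icc kmin kmax ×ˢ Icc ψ₁ ψ₂) :=
      hoc.out h1 h2 ⟨hlt.le, hc_pos.le⟩
    obtain ⟨⟨k', ψ'⟩, ⟨hk', hψ'⟩, heq⟩ := h0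
    exact hk_ne k' hk' ψ' hψ' heq
  -- strict monotonicity in k on the band
  have hmono : ∀ ψ ∈ Icc ψ₁ ψ₂, StrictMonoOn (fun k => h k ψ) (Icc kmin kmax) := by
    intro ψ hψ
    apply strictMonoOn_of_deriv_pos (convex_Icc _ _) (hslice ψ (hJ01 hψ))
    intro x hx
    rw [interior_Icc] at hx
    have hx' := Ioo_subset_Icc_self hx
    rw [(hderiv x hx' ψ hψ).deriv]
    exact hk_pos x hx' ψ hψ
  -- the stable set
  set S : Set ℝ := {k | k ∈ Icc kmin kmax ∧ ∀ ψ ∈ Icc (0:ℝ) 1, h k ψ < 0} with hS_def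
  have hS_sub : S ⊆ Icc kmin kmax := fun k hkk => hkk.1
  have hS_bdd : BddAbove S := BddAbove.mono hS_sub isCompact_Icc.bddAbove
  -- find ε > 0 with h kmin ψ ≤ -ε for all ψ ∈ [0,1]
  have hslice0 : ContinuousOn (fun ψ => h kmin ψ) (Icc (0:ℝ) 1) := by
    have hc2 : ContinuousOn (fun ψ : ℝ => ((kmin, ψ) : ℝ × ℝ)) (Icc 0 1) :=
      (continuous_const.prodMk continuous_id).continuousOn
    exact hcont.comp hc2 (fun ψ hψ => ⟨hmin_mem, hψ⟩)
  obtain ⟨ψm, hψm01, hψm_max⟩ :=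
    isCompact_Icc.exists_isMaxOn (nonempty_Icc.2 zero_le_one) hslice0
  set ε : ℝ := -(h kmin ψm) with hε_def
  have hε_pos : 0 < ε := by
    have := hstab ψm hψm01
    simp only [hε_def]; linarith
  -- uniform continuity on the compact square
  have hucont : UniformContinuousOn (fun p : ℝ × ℝ => h p.1 p.2)
      (Icc kmin kmax ×ˢ Icc 0 1) :=
    (isCompact_Icc.prod isCompact_Icc).uniformContinuousOn_of_continuous hcont
  rw [Metric.uniformContinuousOn_iff] at hucont
  obtain ⟨δ, hδ_pos, hδ⟩ := hucont ε hε_pos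
  -- a stable point above kmin
  set k₁ : ℝ := min (kmin + δ/2) kmax with hk₁_def
  have hk₁_gt : kmin < k₁ := lt_min (by linarith) hk_lt
  have hk₁_mem : k₁ ∈ Icc kmin kmax := ⟨hk₁_gt.le, min_le_right _ _⟩
  have hk₁_S : k₁ ∈ S := by
    refine ⟨hk₁_mem, fun ψ hψ => ?_⟩
    have hd : dist ((k₁, ψ) : ℝ × ℝ) ((kmin, ψ) : ℝ × ℝ) < δ := by
      rw [Prod.dist_eq]
      simp only [dist_self]
      have : dist k₁ kmin < δ := by
        rw [Real.dist_eq, abs_of_nonneg (by linarith)]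
        have : k₁ ≤ kmin + δ/2 := min_le_left _ _
        linarith
      exact max_lt this hδ_pos
    have := hδ (k₁, ψ) ⟨hk₁_mem, hψ⟩ (kmin, ψ) ⟨hmin_mem, hψ⟩ hd
    rw [Real.dist_eq, abs_lt] at this
    have hm : h kmin ψ ≤ h kmin ψm := hψm_max hψ
    simp only [hε_def] at this
    linarith [this.2]
  have hS_ne : S.Nonempty := ⟨k₁, hk₁_S⟩
  set kstar : ℝ := sSup S with hkstar_def
  have hkstar_ge : k₁ ≤ kstar := le_csSup hS_bdd hk₁_S
  have hkstar_gt : kmin < kstar := lt_of_lt_of_le hk₁_gt hkstar_ge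
  have hkstar_le : kstar ≤ kmax := csSup_le hS_ne (fun x hx => (hS_sub hx).2)
  -- key: for k below kstar, stability
  have hbelow : ∀ k ∈ Icc kmin kmax, k < kstar → ∀ ψ ∈ Icc (0:ℝ) 1, h k ψ < 0 := by
    intro k hkk hklt ψ hψ
    obtain ⟨k', hk'S, hk'gt⟩ := exists_lt_of_lt_csSup hS_ne hklt
    by_cases hψIoo : ψ ∈ Ioo ψ₁ ψ₂
    · have hψJ : ψ ∈ Icc ψ₁ ψ₂ := Ioo_subset_Icc_self hψIoo
      have := hmono ψ hψJ hkk (hS_sub hk'S) hk'gt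
      have h2 := hk'S.2 ψ hψ
      simpa using lt_trans this h2
    · exact hneg k hkk ψ hψ hψIoo
  -- kstar < kmax
  have hkstar_lt : kstar < kmax := by
    rcases lt_or_eq_of_le hkstar_le with hlt | heq
    · exact hlt
    -- kstar = kmax: derive contradiction
    exfalso
    have htend : Filter.Tendsto (fun k => h k ψ₀) (nhdsWithin kmax (Icc kmin kmax))
        (nhds (h kmax ψ₀)) := hslice ψ₀ hψ₀01 kmax hmax_mem
    have hev : ∀ᶠ k in nhdsWithin kmax (Icc kmin kmax), 0 < h k ψ₀ :=
      htend.eventually (eventually_gt_nhds hψ₀pos)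
    have hle' : nhdsWithin kmax (Ico kmin kmax) ≤ nhdsWithin kmax (Icc kmin kmax) :=
      nhdsWithin_mono _ Ico_subset_Icc_self
    have hnb : (nhdsWithin kmax (Ico kmin kmax)).NeBot := by
      rw [← mem_closure_iff_nhdsWithin_neBot, closure_Ico hk_lt.ne]
      exact hmax_mem
    have hev' : ∀ᶠ k in nhdsWithin kmax (Ico kmin kmax), 0 < h k ψ₀ := hev.filter_mono hle'
    obtain ⟨k₂, hk₂pos, hk₂mem⟩ := (hev'.and self_mem_nhdsWithin).exists
    obtain ⟨k₃, hk₃S, hk₃gt⟩ := exists_lt_of_lt_csSup hS_ne (heq ▸ hk₂mem.2 : k₂ < kstar)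
    have hmlt := hmono ψ₀ hψ₀J ⟨hk₂mem.1, hk₂mem.2.le⟩ (hS_sub hk₃S) hk₃gt
    have := hk₃S.2 ψ₀ hψ₀01
    simp only at hmlt
    linarith
  refine ⟨kstar, hkstar_gt, hkstar_lt, hbelow, ?_⟩
  -- instability above kstar
  intro k hkk hkgt
  set k' : ℝ := (kstar + k)/2 with hk'_def
  have hk'1 : kstar < k' := by simp only [hk'_def]; linarith
  have hk'2 : k' < k := by simp only [hk'_def]; linarith
  have hk'_mem : k' ∈ Icc kmin kmax := ⟨by linarith, by linarith [hkk.2]⟩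
  have hk'_notS : k' ∉ S := fun hmem => absurd (le_csSup hS_bdd hmem) (not_le.2 hk'1)
  have : ∃ ψ ∈ Icc (0:ℝ) 1, 0 ≤ h k' ψ := by
    by_contra hc
    push_neg at hc
    exact hk'_notS ⟨hk'_mem, fun ψ hψ => hc ψ hψ⟩
  obtain ⟨ψ, hψ01, hψge⟩ := this
  have hψIoo : ψ ∈ Ioo ψ₁ ψ₂ := by
    by_contra hc
    exact absurd (hneg k' hk'_mem ψ hψ01 hc) (not_lt.2 hψge)
  have hmlt := hmono ψ (Ioo_subset_Icc_self hψIoo) hk'_mem hkk hk'2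
  exact ⟨ψ, hψ01, lt_of_le_of_lt hψge (by simpa using hmlt)⟩
end

section
/- Under the hypotheses of the sharp transition lemma, assume additionally that h is C² on B = [k_min,k_max] × [ψ₁,ψ₂] with ∂h/∂k > 0 and ∂²h/∂ψ² < 0 on B (strict concavity in ψ). Then the transition point is unique: there is exactly one pair (k*, ψ*) ∈ (k_min,k_max) × [ψ₁,ψ₂] with h(k*,ψ*) = 0 and ∂h/∂ψ(k*,ψ*) = 0, i.e. at k = k* the function ψ ↦ h(k*,ψ) attains its maximum value 0 at the single point ψ*. -/
open Set
open Filter Topology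

/-- Sharp stability transition, part (ii): uniqueness of the transition point. Under the
hypotheses of part (i), if moreover `∂h/∂k > 0` and `∂²h/∂ψ² < 0` (strict concavity in
`ψ`) on `B = [k_min,k_max] × [ψ₁,ψ₂]`, then there is exactly one pair
`(k*,ψ*) ∈ (k_min,k_max) × [ψ₁,ψ₂]` with `h(k*,ψ*) = 0` and `∂h/∂ψ(k*,ψ*) = 0`;
at `k = k*` the function `ψ ↦ h(k*,ψ)` attains its maximum value `0` at `ψ*` alone. -/
theorem sharp_transition_part_ii (kmin kmax ψ₁ ψ₂ : ℝ) (h hk hψ hψψ : ℝ → ℝ → ℝ)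
    (hk_lt : kmin < kmax) (hψ₁ : 0 ≤ ψ₁) (hψ₁₂ : ψ₁ < ψ₂) (hψ₂ : ψ₂ ≤ 1)
    (hcont : ContinuousOn (fun p : ℝ × ℝ => h p.1 p.2) (Icc kmin kmax ×ˢ Icc 0 1))
    (hstab : ∀ ψ ∈ Icc (0:ℝ) 1, h kmin ψ < 0)
    (hunstab : ∃ ψ₀ ∈ Icc (0:ℝ) 1, 0 < h kmax ψ₀)
    (hneg : ∀ k ∈ Icc kmin kmax, ∀ ψ ∈ Icc (0:ℝ) 1, ψ ∉ Ioo ψ₁ ψ₂ → h k ψ < 0)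
    (hderivk : ∀ k ∈ Icc kmin kmax, ∀ ψ ∈ Icc ψ₁ ψ₂,
      HasDerivAt (fun k' => h k' ψ) (hk k ψ) k)
    (hderivψ : ∀ k ∈ Icc kmin kmax, ∀ ψ ∈ Icc ψ₁ ψ₂,
      HasDerivAt (fun ψ' => h k ψ') (hψ k ψ) ψ)
    (hderivψψ : ∀ k ∈ Icc kmin kmax, ∀ ψ ∈ Icc ψ₁ ψ₂,
      HasDerivAt (fun ψ' => hψ k ψ') (hψψ k ψ) ψ)
    (hC2 : ContinuousOn (fun p : ℝ × ℝ => hψψ p.1 p.2) (Icc kmin kmax ×ˢ Icc ψ₁ ψ₂))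
    (hk_pos : ∀ k ∈ Icc kmin kmax, ∀ ψ ∈ Icc ψ₁ ψ₂, 0 < hk k ψ)
    (hψψ_neg : ∀ k ∈ Icc kmin kmax, ∀ ψ ∈ Icc ψ₁ ψ₂, hψψ k ψ < 0) :
    ∃! p : ℝ × ℝ, p.1 ∈ Ioo kmin kmax ∧ p.2 ∈ Icc ψ₁ ψ₂ ∧
      h p.1 p.2 = 0 ∧ hψ p.1 p.2 = 0 ∧
      (∀ ψ ∈ Icc (0:ℝ) 1, ψ ≠ p.2 → h p.1 ψ < 0) := by
  have hsub01 : Icc ψ₁ ψ₂ ⊆ Icc (0:ℝ) 1 := Icc_subset_Icc hψ₁ hψ₂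
  set A : Set (ℝ × ℝ) := Icc kmin kmax ×ˢ Icc ψ₁ ψ₂ with hAdef
  have hAsub : A ⊆ Icc kmin kmax ×ˢ Icc (0:ℝ) 1 := prod_mono_right hsub01
  have hAcomp : IsCompact A := isCompact_Icc.prod isCompact_Icc
  have hAclosed : IsClosed A := isClosed_Icc.prod isClosed_Icc
  have hcontA : ContinuousOn (fun p : ℝ × ℝ => h p.1 p.2) A := hcont.mono hAsub
  set K : Set (ℝ × ℝ) := A ∩ (fun p : ℝ × ℝ => h p.1 p.2) ⁻¹' Ici 0 with hKdef
  have hKclosed : IsClosed K := hcontA.preimage_isClosed_of_isClosed hAclosed isClosed_Ici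
  have hKcomp : IsCompact K := hAcomp.of_isClosed_subset hKclosed inter_subset_left
  obtain ⟨ψ₀, hψ₀01, hψ₀pos⟩ := hunstab
  have hkmaxmem : kmax ∈ Icc kmin kmax := ⟨hk_lt.le, le_refl _⟩
  have hψ₀Ioo : ψ₀ ∈ Ioo ψ₁ ψ₂ := by
    by_contra hc
    exact absurd (hneg kmax hkmaxmem ψ₀ hψ₀01 hc) (not_lt.2 hψ₀pos.le)
  have hKne : K.Nonempty :=
    ⟨(kmax, ψ₀), ⟨hkmaxmem, Ioo_subset_Icc_self hψ₀Ioo⟩, hψ₀pos.le⟩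
  obtain ⟨p, hpK, hpmin⟩ := hKcomp.exists_isMinOn hKne continuous_fst.continuousOn
  have hpmin' : ∀ q ∈ K, p.1 ≤ q.1 := fun q hq => hpmin hq
  have hpA : p ∈ A := hpK.1
  have hkmem : p.1 ∈ Icc kmin kmax := hpA.1
  have hψmem : p.2 ∈ Icc ψ₁ ψ₂ := hpA.2
  have hpnonneg : (0:ℝ) ≤ h p.1 p.2 := hpK.2
  -- k* > kmin
  have hkmin_lt : kmin < p.1 := by
    rcases eq_or_lt_of_le hkmem.1 with heq | hlt
    · exact absurd hpnonneg (not_le.2 (heq ▸ hstab p.2 (hsub01 hψmem)))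
    · exact hlt
  -- continuity in k at each point
  have hcontk : ∀ ψ ∈ Icc ψ₁ ψ₂, ∀ k ∈ Icc kmin kmax,
      ContinuousAt (fun k' => h k' ψ) k :=
    fun ψ hψm k hkm => (hderivk k hkm ψ hψm).continuousAt
  -- if h k ψ > 0 at some k > kmin, there is a smaller k' with h k' ψ > 0
  have hnolow : ∀ ψ ∈ Icc ψ₁ ψ₂, ∀ k ∈ Icc kmin kmax, 0 < h k ψ →
      ∃ k' ∈ Icc kmin kmax, k' < k ∧ 0 ≤ h k' ψ := by
    intro ψ hψm k hkm hpos
    have hkmin_lt_k : kmin < k := by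
      rcases eq_or_lt_of_le hkm.1 with heq | hlt
      · exact absurd hpos (not_lt.2 (heq ▸ (hstab ψ (hsub01 hψm))).le)
      · exact hlt
    have hev : ∀ᶠ k' in 𝓝 k, 0 < h k' ψ :=
      (hcontk ψ hψm k hkm).eventually (eventually_gt_nhds hpos)
    have hev2 : ∀ᶠ k' in 𝓝 k, kmin < k' := eventually_gt_nhds hkmin_lt_k
    have : ∀ᶠ k' in 𝓝[<] k, 0 < h k' ψ ∧ kmin < k' :=
      ((hev.and hev2).filter_mono nhdsWithin_le_nhds)
    obtain ⟨k', hk'⟩ := (this.and self_mem_nhdsWithin).exists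
    have hk'lt : k' < k := hk'.2
    exact ⟨k', ⟨hk'.1.2.le, hk'lt.le.trans hkm.2⟩, hk'lt, hk'.1.1.le⟩
  -- k* < kmax
  have hkmax_gt : p.1 < kmax := by
    obtain ⟨k', hk'mem, hk'lt, hk'nn⟩ :=
      hnolow ψ₀ (Ioo_subset_Icc_self hψ₀Ioo) kmax hkmaxmem hψ₀pos
    exact lt_of_le_of_lt (hpmin' (k', ψ₀) ⟨⟨hk'mem, Ioo_subset_Icc_self hψ₀Ioo⟩, hk'nn⟩) hk'lt
  -- max value at k* is ≤ 0
  have hle0 : ∀ ψ ∈ Icc ψ₁ ψ₂, h p.1 ψ ≤ 0 := by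
    intro ψ hψm
    by_contra hc
    push_neg at hc
    obtain ⟨k', hk'mem, hk'lt, hk'nn⟩ := hnolow ψ hψm p.1 hkmem hc
    exact absurd (hpmin' (k', ψ) ⟨⟨hk'mem, hψm⟩, hk'nn⟩) (not_le.2 hk'lt)
  have hle0' : ∀ ψ ∈ Icc (0:ℝ) 1, h p.1 ψ ≤ 0 := by
    intro ψ hψm
    by_cases hcase : ψ ∈ Icc ψ₁ ψ₂
    · exact hle0 ψ hcase
    · have : ψ ∉ Ioo ψ₁ ψ₂ := fun hc => hcase (Ioo_subset_Icc_self hc)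
      exact (hneg p.1 hkmem ψ hψm this).le
  have hp0 : h p.1 p.2 = 0 := le_antisymm (hle0 p.2 hψmem) hpnonneg
  have hψstarIoo : p.2 ∈ Ioo ψ₁ ψ₂ := by
    by_contra hc
    exact absurd hp0 (ne_of_lt (hneg p.1 hkmem p.2 (hsub01 hψmem) hc))
  -- derivative in ψ vanishes
  have hψp0 : hψ p.1 p.2 = 0 := by
    have hloc : IsLocalMax (fun ψ' => h p.1 ψ') p.2 := by
      filter_upwards [Ioo_mem_nhds hψstarIoo.1 hψstarIoo.2] with ψ hψm
      rw [hp0]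
      exact hle0 ψ (Ioo_subset_Icc_self hψm)
    exact hloc.hasDerivAt_eq_zero (hderivψ p.1 hkmem p.2 hψmem)
  -- hψ (p.1) strictly decreasing in ψ
  have hanti : StrictAntiOn (fun ψ' => hψ p.1 ψ') (Icc ψ₁ ψ₂) := by
    apply strictAntiOn_of_deriv_neg (convex_Icc _ _)
    · exact fun ψ hψm => (hderivψψ p.1 hkmem ψ hψm).continuousAt.continuousWithinAt
    · intro ψ hψm
      rw [interior_Icc] at hψm
      rw [(hderivψψ p.1 hkmem ψ (Ioo_subset_Icc_self hψm)).deriv]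
      exact hψψ_neg p.1 hkmem ψ (Ioo_subset_Icc_self hψm)
  -- strict maximum: h p.1 ψ < 0 for ψ ≠ p.2
  have hstrict : ∀ ψ ∈ Icc (0:ℝ) 1, ψ ≠ p.2 → h p.1 ψ < 0 := by
    intro ψ hψ01 hne
    by_cases hcase : ψ ∈ Icc ψ₁ ψ₂
    swap
    · exact hneg p.1 hkmem ψ hψ01 (fun hc => hcase (Ioo_subset_Icc_self hc))
    rcases lt_or_gt_of_ne hne with hlt | hgt
    · -- ψ < p.2; MVT on [ψ, p.2]
      have hIcc : Icc ψ p.2 ⊆ Icc ψ₁ ψ₂ := Icc_subset_Icc hcase.1 hψmem.2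
      obtain ⟨c, hc, hceq⟩ := exists_hasDerivAt_eq_slope (fun ψ' => h p.1 ψ')
        (fun ψ' => hψ p.1 ψ') hlt
        (fun x hx => (hderivψ p.1 hkmem x (hIcc hx)).continuousAt.continuousWithinAt)
        (fun x hx => hderivψ p.1 hkmem x (hIcc (Ioo_subset_Icc_self hx)))
      have hcmem : c ∈ Icc ψ₁ ψ₂ := hIcc (Ioo_subset_Icc_self hc)
      have hcpos : 0 < hψ p.1 c := by
        have := hanti hcmem hψmem hc.2
        simpa [hψp0] using this
      rw [hceq, hp0] at hcpos
      have hd : 0 < p.2 - ψ := sub_pos.2 hlt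
      have := (lt_div_iff₀ hd).mp hcpos
      linarith
    · -- p.2 < ψ; MVT on [p.2, ψ]
      have hIcc : Icc p.2 ψ ⊆ Icc ψ₁ ψ₂ := Icc_subset_Icc hψmem.1 hcase.2
      obtain ⟨c, hc, hceq⟩ := exists_hasDerivAt_eq_slope (fun ψ' => h p.1 ψ')
        (fun ψ' => hψ p.1 ψ') hgt
        (fun x hx => (hderivψ p.1 hkmem x (hIcc hx)).continuousAt.continuousWithinAt)
        (fun x hx => hderivψ p.1 hkmem x (hIcc (Ioo_subset_Icc_self hx)))
      have hcmem : c ∈ Icc ψ₁ ψ₂ := hIcc (Ioo_subset_Icc_self hc)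
      have hcneg : hψ p.1 c < 0 := by
        have := hanti hψmem hcmem hc.1
        simpa [hψp0] using this
      rw [hceq, hp0] at hcneg
      have hd : 0 < ψ - p.2 := sub_pos.2 hgt
      have := (div_lt_iff₀ hd).mp hcneg
      linarith
  -- strict monotonicity in k
  have hmono : ∀ ψ ∈ Icc ψ₁ ψ₂, StrictMonoOn (fun k' => h k' ψ) (Icc kmin kmax) := by
    intro ψ hψm
    apply strictMonoOn_of_deriv_pos (convex_Icc _ _)
    · exact fun k hkm => (hderivk k hkm ψ hψm).continuousAt.continuousWithinAt
    · intro k hkm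
      rw [interior_Icc] at hkm
      rw [(hderivk k (Ioo_subset_Icc_self hkm) ψ hψm).deriv]
      exact hk_pos k (Ioo_subset_Icc_self hkm) ψ hψm
  refine ⟨p, ⟨⟨hkmin_lt, hkmax_gt⟩, hψmem, hp0, hψp0, hstrict⟩, ?_⟩
  rintro ⟨k, ψ⟩ ⟨hqk, hqψ, hq0, hqψ0, hqstrict⟩
  have hqkIcc : k ∈ Icc kmin kmax := Ioo_subset_Icc_self hqk
  rcases lt_trichotomy k p.1 with hlt | heq | hgt
  · have : h k ψ < h p.1 ψ := hmono ψ hqψ hqkIcc hkmem hlt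
    rw [hq0] at this
    exact absurd (hle0 ψ hqψ) (not_le.2 this)
  · -- same k; uniqueness of critical point of hψ
    have hψeq : ψ = p.2 := by
      apply hanti.injOn hqψ hψmem
      simp only
      rw [hψp0, ← heq, hqψ0]
    exact Prod.ext heq hψeq
  · have hpos : 0 < h k p.2 := by
      have : h p.1 p.2 < h k p.2 := hmono p.2 hψmem hkmem hqkIcc hgt
      rwa [hp0] at this
    by_cases hψeq : p.2 = ψ
    · rw [hψeq, hq0] at hpos; exact absurd hpos (lt_irrefl 0)
    · exact absurd (hqstrict p.2 (hsub01 hψmem) hψeq) (not_lt.2 hpos.le)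
end
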